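/- Let K ≥ 1 be an integer and η > 0, τ > 0 reals, and let μ_T : {1,…,K} → ℝ satisfy μ_T(t) ≥ 0 for all t. Define μ_e(l) = η·∑_{t=l+1}^{K} τ^{t−l−1}·μ_T(t) for l ∈ {0,…,K−1}. Suppose k ∈ {0,…,K−1} is the largest index with μ_e(k) > 0, i.e., μ_e(k) > 0 and μ_e(m) = 0 for all m with k < m ≤ K−1. Then μ_T(k+1) > 0 and μ_T(m) = 0 for all m with k+1 < m ≤ K. -/

import Mathlib

/-- One direction of Corollary 1: if `k` is the largest index in `{0,…,K−1}` with
`μe k > 0`, then the temperature-limit multiplier satisfies `μT (k+1) > 0` and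
`μT m = 0` for all `m` with `k+1 < m ≤ K`. -/
theorem temp_limit_active_of_relaxation_tight
    (K : ℕ) (hK : 1 ≤ K) (η τ : ℝ) (hη : 0 < η) (hτ : 0 < τ)
    (μT : ℕ → ℝ) (hμT : ∀ t, 1 ≤ t → t ≤ K → 0 ≤ μT t)
    (μe : ℕ → ℝ)
    (hμe : ∀ l, l ≤ K - 1 →
      μe l = η * ∑ t ∈ Finset.Icc (l + 1) K, τ ^ (t - l - 1) * μT t)
    (k : ℕ) (hk : k ≤ K - 1)
    (hpos : 0 < μe k)
    (hlast : ∀ m, k < m → m ≤ K - 1 → μe m = 0) :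
    0 < μT (k + 1) ∧ ∀ m, k + 1 < m → m ≤ K → μT m = 0 := by
  have hKk : k + 1 ≤ K := by omega
  have hz : ∀ m, k + 1 < m → m ≤ K → μT m = 0 := by
    intro m hm hmK
    have hk1 : k + 1 ≤ K - 1 := by omega
    have h0 := hlast (k + 1) (by omega) hk1
    rw [hμe (k + 1) hk1] at h0
    have hsum : ∑ t ∈ Finset.Icc (k + 1 + 1) K, τ ^ (t - (k + 1) - 1) * μT t = 0 := by
      rcases mul_eq_zero.mp h0 with h | h
      · exact absurd h (ne_of_gt hη)
      · exact h
    have hterm : ∀ t ∈ Finset.Icc (k + 1 + 1) K, 0 ≤ τ ^ (t - (k + 1) - 1) * μT t := by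
      intro t ht
      simp only [Finset.mem_Icc] at ht
      exact mul_nonneg (pow_nonneg hτ.le _) (hμT t (by omega) ht.2)
    have hm0 := (Finset.sum_eq_zero_iff_of_nonneg hterm).mp hsum m
      (Finset.mem_Icc.mpr ⟨by omega, hmK⟩)
    have hpow : (0:ℝ) < τ ^ (m - (k + 1) - 1) := pow_pos hτ _
    rcases mul_eq_zero.mp hm0 with h | h
    · exact absurd h (ne_of_gt hpow)
    · exact h
  refine ⟨?_, hz⟩
  rw [hμe k hk] at hpos
  have hsum : ∑ t ∈ Finset.Icc (k + 1) K, τ ^ (t - k - 1) * μT t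
      = τ ^ (k + 1 - k - 1) * μT (k + 1) := by
    apply Finset.sum_eq_single_of_mem
    · exact Finset.mem_Icc.mpr ⟨le_refl _, hKk⟩
    · intro t ht hne
      simp only [Finset.mem_Icc] at ht
      have : μT t = 0 := hz t (by omega) ht.2
      simp [this]
  rw [hsum] at hpos
  simp only [show k + 1 - k - 1 = 0 from by omega, pow_zero, one_mul] at hpos
  nlinarith [hpos, hη]
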